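/- Let N ≥ 1 and s ≥ 0 be integers, and let p, q, t be integers with 0 ≤ p ≤ q < t ≤ N and t - q ≤ s + 1. Then (cos(qπ/N) - cos(tπ/N)) / (cos(pπ/N) - cos(tπ/N)) ≤ (π²(s+1)/2) · 1/(q - p + 1). -/

import Mathlib

open Real

set_option maxHeartbeats 1000000 in
/-- Key gap estimate for Chebyshev points of the second kind: removing at most `s`
consecutive points, the ratio of the enlarged gap to the distance to an earlier
point is at most `(π²(s+1)/2)/(q-p+1)`. -/
theorem chebyshev_gap_ratio_bound
    (N s p q t : ℕ) (hN : 1 ≤ N) (hpq : p ≤ q) (hqt : q < t) (htN : t ≤ N)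
    (hgap : t - q ≤ s + 1) :
    (Real.cos (q * Real.pi / N) - Real.cos (t * Real.pi / N)) /
        (Real.cos (p * Real.pi / N) - Real.cos (t * Real.pi / N)) ≤
      (Real.pi ^ 2 * (s + 1) / 2) * (1 / ((q : ℝ) - p + 1)) := by
  have hπ : (0:ℝ) < π := Real.pi_pos
  have hN0 : (0:ℝ) < N := by exact_mod_cast hN
  set θ : ℝ := π / (2*N) with hθdef
  have hθ0 : 0 < θ := by positivity
  have hπθ : π = 2*N*θ := by rw [hθdef]; field_simp
  -- cast facts
  have hp : (p:ℝ) ≤ q := by exact_mod_cast hpq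
  have hq : (q:ℝ) < t := by exact_mod_cast hqt
  have hq1 : (q:ℝ) + 1 ≤ t := by exact_mod_cast hqt
  have ht : (t:ℝ) ≤ N := by exact_mod_cast htN
  have hp0 : (0:ℝ) ≤ p := Nat.cast_nonneg p
  have hgap' : (t:ℝ) - q ≤ s + 1 := by
    have h := Nat.sub_le_iff_le_add.mp hgap
    have : (t:ℝ) ≤ (s:ℝ) + 1 + q := by exact_mod_cast h
    linarith
  set A : ℝ := (t:ℝ) + q with hA
  set B : ℝ := (t:ℝ) - q with hB
  set C : ℝ := (t:ℝ) + p with hC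
  set D : ℝ := (t:ℝ) - p with hD
  have hA1 : 1 ≤ A := by simp only [hA]; have : (0:ℝ) ≤ q := Nat.cast_nonneg q; linarith
  have hA2N : A < 2*N := by simp only [hA]; linarith
  have hB1 : 1 ≤ B := by simp only [hB]; linarith
  have hCA : C ≤ A := by simp only [hA, hC]; linarith
  have hC1 : 1 ≤ C := by simp only [hC]; linarith
  have hC2N : C < 2*N := by simp only [hC]; linarith
  have hD1 : 1 ≤ D := by simp only [hD]; linarith
  have hDN : D ≤ N := by simp only [hD]; linarith
  have hBD : B ≤ D := by simp only [hB, hD]; linarith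
  -- product form of numerator and denominator
  have numeq : Real.cos (q * π / N) - Real.cos (t * π / N)
      = 2 * Real.sin (A*θ) * Real.sin (B*θ) := by
    rw [Real.cos_sub_cos]
    have h1 : ((q:ℝ) * π / N + t * π / N)/2 = A*θ := by
      simp only [hA, hθdef]; field_simp; ring
    have h2 : ((q:ℝ) * π / N - t * π / N)/2 = -(B*θ) := by
      simp only [hB, hθdef]; field_simp; ring
    rw [h1, h2, Real.sin_neg]; ring
  have deneq : Real.cos (p * π / N) - Real.cos (t * π / N)
      = 2 * Real.sin (C*θ) * Real.sin (D*θ) := by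
    rw [Real.cos_sub_cos]
    have h1 : ((p:ℝ) * π / N + t * π / N)/2 = C*θ := by
      simp only [hC, hθdef]; field_simp; ring
    have h2 : ((p:ℝ) * π / N - t * π / N)/2 = -(D*θ) := by
      simp only [hD, hθdef]; field_simp; ring
    rw [h1, h2, Real.sin_neg]; ring
  clear_value θ A B C D
  -- positivity of the denominator sines
  have hsinC : 0 < Real.sin (C*θ) := by
    apply Real.sin_pos_of_pos_of_lt_pi (by positivity)
    rw [hπθ]
    exact mul_lt_mul_of_pos_right hC2N hθ0
  have hsinD : 0 < Real.sin (D*θ) := by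
    apply Real.sin_pos_of_pos_of_lt_pi (by positivity)
    rw [hπθ]
    exact mul_lt_mul_of_pos_right (by linarith : D < 2*(N:ℝ)) hθ0
  have hsinAnn : 0 ≤ Real.sin (A*θ) := by
    apply Real.sin_nonneg_of_nonneg_of_le_pi (by positivity)
    rw [hπθ]
    exact mul_le_mul_of_nonneg_right hA2N.le hθ0.le
  have hsinBnn : 0 ≤ Real.sin (B*θ) := by
    apply Real.sin_nonneg_of_nonneg_of_le_pi (by positivity)
    rw [hπθ]
    exact mul_le_mul_of_nonneg_right (by linarith : B ≤ 2*(N:ℝ)) hθ0.le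
  -- lower bound for sin(Dθ): D ≤ N so Dθ ≤ π/2
  have hsD : 2/π * (D*θ) ≤ Real.sin (D*θ) := by
    apply Real.mul_le_sin (by positivity)
    rw [hπθ]
    linarith [mul_le_mul_of_nonneg_right hDN hθ0.le]
  -- upper bound for sin(Bθ)
  have hsB : Real.sin (B*θ) ≤ B*θ := Real.sin_le (by positivity)
  -- choose comparison values for A and C depending on whether C ≤ N
  obtain ⟨a, c, han, hsa, hsc, hac⟩ :
      ∃ a c : ℝ, 0 ≤ a ∧ Real.sin (A*θ) ≤ a*θ ∧ 2/π * (c*θ) ≤ Real.sin (C*θ) ∧ a ≤ 2*c := by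
    rcases le_or_gt C N with hCN | hCN
    · refine ⟨A, C, by linarith, Real.sin_le (by positivity), ?_, by linarith⟩
      apply Real.mul_le_sin (by positivity)
      rw [hπθ]
      linarith [mul_le_mul_of_nonneg_right hCN hθ0.le]
    · refine ⟨2*N - A, 2*N - C, by linarith, ?_, ?_, by linarith⟩
      · have he : Real.sin (A*θ) = Real.sin ((2*N - A)*θ) := by
          rw [show (2*(N:ℝ) - A)*θ = π - A*θ by rw [hπθ]; ring, Real.sin_pi_sub]
        rw [he]
        exact Real.sin_le (mul_nonneg (by linarith) hθ0.le)
      · have he : Real.sin (C*θ) = Real.sin ((2*N - C)*θ) := by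
          rw [show (2*(N:ℝ) - C)*θ = π - C*θ by rw [hπθ]; ring, Real.sin_pi_sub]
        rw [he]
        apply Real.mul_le_sin (mul_nonneg (by linarith) hθ0.le)
        rw [hπθ]
        linarith [mul_le_mul_of_nonneg_right (show 2*(N:ℝ) - C ≤ N by linarith) hθ0.le]
  have hc0 : 0 ≤ c := by linarith
  -- key arithmetic inequality : B*(q-p+1) ≤ (s+1)*D
  have hm0 : (0:ℝ) < (q:ℝ) - p + 1 := by linarith
  have hkey : B * ((q:ℝ) - p + 1) ≤ ((s:ℝ)+1) * D := by
    have hqp : (0:ℝ) ≤ (q:ℝ) - p := by linarith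
    have h1 : B * ((q:ℝ)-p) ≤ ((s:ℝ)+1) * ((q:ℝ)-p) := by
      apply mul_le_mul_of_nonneg_right _ hqp
      simpa [hB] using hgap'
    have h2 : 0 ≤ (s:ℝ) * B := mul_nonneg (Nat.cast_nonneg s) (by linarith)
    have hD' : D = B + ((q:ℝ)-p) := by simp only [hB, hD]; ring
    rw [hD']
    linarith
  -- denominator is positive
  have hden : 0 < Real.cos (p * π / N) - Real.cos (t * π / N) := by
    rw [deneq]; positivity
  have hden2 : 0 < 2 * Real.sin (C*θ) * Real.sin (D*θ) := by positivity
  rw [numeq, deneq, div_le_iff₀ hden2]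
  have hrhs : (π ^ 2 * ((s:ℝ) + 1) / 2) * (1 / ((q : ℝ) - p + 1))
        * (2 * Real.sin (C*θ) * Real.sin (D*θ))
      = π ^ 2 * ((s:ℝ)+1) * (Real.sin (C*θ) * Real.sin (D*θ)) / ((q:ℝ) - p + 1) := by
    field_simp
  rw [hrhs, le_div_iff₀ hm0]
  -- now a pure product chain
  have h1 : Real.sin (A*θ) * Real.sin (B*θ) ≤ (a*θ) * (B*θ) :=
    mul_le_mul hsa hsB hsinBnn (by positivity)
  have h2 : (2/π*(c*θ)) * (2/π*(D*θ)) ≤ Real.sin (C*θ) * Real.sin (D*θ) :=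
    mul_le_mul hsc hsD (by positivity) (le_of_lt hsinC)
  have h3 : a * (B * ((q:ℝ)-p+1)) ≤ (2*c) * (((s:ℝ)+1) * D) :=
    mul_le_mul hac hkey (by positivity) (by positivity)
  calc 2 * Real.sin (A*θ) * Real.sin (B*θ) * ((q:ℝ) - p + 1)
      ≤ 2 * ((a*θ) * (B*θ)) * ((q:ℝ) - p + 1) := by
        have := mul_le_mul_of_nonneg_right
          (mul_le_mul_of_nonneg_left h1 (by norm_num : (0:ℝ) ≤ 2)) hm0.le
        linarith
    _ = 2 * (a * (B * ((q:ℝ)-p+1))) * θ^2 := by ring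
    _ ≤ 2 * ((2*c) * (((s:ℝ)+1) * D)) * θ^2 := by
        have := mul_le_mul_of_nonneg_right
          (mul_le_mul_of_nonneg_left h3 (by norm_num : (0:ℝ) ≤ 2)) (sq_nonneg θ)
        linarith
    _ = π^2 * ((s:ℝ)+1) * ((2/π*(c*θ)) * (2/π*(D*θ))) := by field_simp
    _ ≤ π^2 * ((s:ℝ)+1) * (Real.sin (C*θ) * Real.sin (D*θ)) := by
        have := mul_le_mul_of_nonneg_left h2 (by positivity : (0:ℝ) ≤ π^2 * ((s:ℝ)+1))
        linarith
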